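/- For all real numbers $p \in [1,2]$ and all $x \le 1$, one has $0 \le (1-x)^p - (1 - p x) \le \frac{p^2}{4} x^2$. -/
import Mathlib

theorem stmt_0 (p x : ℝ) (hp1 : 1 ≤ p) (hp2 : p ≤ 2) (hx : x ≤ 1) :
    0 ≤ (1 - x) ^ p - (1 - p * x) ∧ (1 - x) ^ p - (1 - p * x) ≤ p ^ 2 / 4 * x ^ 2 := by
  have hs : (-1 : ℝ) ≤ -x := by linarith
  have hb : (0:ℝ) ≤ 1 - x := by linarith
  constructor
  · have h := one_add_mul_self_le_rpow_one_add hs hp1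
    have : (1 : ℝ) + -x = 1 - x := by ring
    rw [this] at h
    nlinarith [h]
  · have h2 : (1 + -x) ^ (p / 2) ≤ 1 + (p / 2) * (-x) :=
      rpow_one_add_le_one_add_mul_self hs (by linarith) (by linarith)
    rw [show (1:ℝ) + -x = 1 - x by ring] at h2
    have hpos : (0:ℝ) ≤ (1 - x) ^ (p / 2) := Real.rpow_nonneg hb _
    have hsq : ((1 - x) ^ (p / 2)) ^ 2 ≤ (1 + (p / 2) * (-x)) ^ 2 := by
      apply sq_le_sq' <;> nlinarith
    have key : ((1 - x) ^ (p / 2)) ^ 2 = (1 - x) ^ p := by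
      rw [← Real.rpow_natCast ((1 - x) ^ (p / 2)) 2, ← Real.rpow_mul hb]
      norm_num
    nlinarith [hsq, key]
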